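/- Let p̃, q̃ be integers with p̃ ≠ 0 and q̃ ≥ 97·|p̃|, and let u be any complex root of the quartic equation u⁴ + 8u² − 12·i·u − 4 = 0. Then the open disc {t ∈ ℂ : |t − (q̃² + 5·p̃·q̃ + 10·p̃²)| < 74·|p̃|³/q̃} (which contains the real asymptotic interval) and the open disc {t ∈ ℂ : |t − c(u)| < 51·|p̃|³/q̃} are disjoint. -/

import Mathlib

/-- The center `c(u) = i q̃² + u p̃ q̃ − ((u + i u²)/2) p̃²` of the asymptotic disc
associated with a root `u` of the quartic `u⁴ + 8u² − 12iu − 4 = 0`. -/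
noncomputable def discCenter (p' q' : ℤ) (u : ℂ) : ℂ :=
  Complex.I * (q' : ℂ) ^ 2 + u * (p' : ℂ) * (q' : ℂ)
    - ((u + Complex.I * u ^ 2) / 2) * (p' : ℂ) ^ 2

set_option maxHeartbeats 1000000 in
/-- For integers `p̃ ≠ 0`, `q̃ ≥ 97|p̃|` and any root `u` of `u⁴ + 8u² − 12iu − 4 = 0`,
the open disc of radius `74|p̃|³/q̃` centered at the real point `q̃² + 5p̃q̃ + 10p̃²`
and the open disc of radius `51|p̃|³/q̃` centered at `c(u)` are disjoint. -/
theorem stmt_10 (p' q' : ℤ) (hp : p' ≠ 0) (hq : 97 * |p'| ≤ q') (u : ℂ)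
    (hu : u ^ 4 + 8 * u ^ 2 - 12 * Complex.I * u - 4 = 0) :
    ∀ t : ℂ, ¬(‖t - ((q' : ℂ) ^ 2 + 5 * (p' : ℂ) * (q' : ℂ) + 10 * (p' : ℂ) ^ 2)‖
        < 74 * |(p' : ℝ)| ^ 3 / (q' : ℝ) ∧
      ‖t - discCenter p' q' u‖ < 51 * |(p' : ℝ)| ^ 3 / (q' : ℝ)) := by
  rintro t ⟨h1, h2⟩
  set P : ℝ := |(p' : ℝ)| with hPdef
  set Q : ℝ := (q' : ℝ) with hQdef
  have hP1 : (1 : ℝ) ≤ P := by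
    have : (1 : ℤ) ≤ |p'| := Int.one_le_abs hp
    have : (1 : ℝ) ≤ |(p' : ℤ)| := by exact_mod_cast this
    simpa [hPdef, Int.cast_abs] using this
  have hQP : 97 * P ≤ Q := by
    have : ((97 * |p'| : ℤ) : ℝ) ≤ ((q' : ℤ) : ℝ) := by exact_mod_cast hq
    simpa [hPdef, hQdef, Int.cast_abs] using this
  have hQpos : (0 : ℝ) < Q := by nlinarith
  -- bound on |u|
  set r : ℝ := ‖u‖ with hrdef
  have hr0 : 0 ≤ r := norm_nonneg u
  have hrb : r ^ 4 ≤ 8 * r ^ 2 + 12 * r + 4 := by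
    have heq : u ^ 4 = 4 + 12 * Complex.I * u - 8 * u ^ 2 := by linear_combination hu
    have := congrArg (‖·‖) heq
    rw [norm_pow] at this
    have h1 : ‖4 + 12 * Complex.I * u - 8 * u ^ 2‖
        ≤ ‖4 + 12 * Complex.I * u‖ + ‖8 * u ^ 2‖ :=
      norm_sub_le _ _
    have h2 : ‖4 + 12 * Complex.I * u‖ ≤ 4 + 12 * r := by
      refine le_trans (norm_add_le _ _) ?_
      simp [hrdef, Complex.norm_I, norm_mul]
    have h3 : ‖8 * u ^ 2‖ = 8 * r ^ 2 := by
      simp [norm_mul, norm_pow, hrdef]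
    calc r ^ 4 = ‖4 + 12 * Complex.I * u - 8 * u ^ 2‖ := this
      _ ≤ (4 + 12 * r) + 8 * r ^ 2 := by linarith
      _ = 8 * r ^ 2 + 12 * r + 4 := by ring
  have hr4 : r ≤ 4 := by nlinarith [sq_nonneg r, sq_nonneg (r - 4), sq_nonneg (r + 1)]
  -- distance between centers
  set R : ℂ := (q' : ℂ) ^ 2 + 5 * (p' : ℂ) * (q' : ℂ) + 10 * (p' : ℂ) ^ 2 with hRdef
  set c : ℂ := discCenter p' q' u with hcdef
  have habsp : ‖(p' : ℂ)‖ = P := by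
    simpa [hPdef] using Complex.norm_intCast p'
  have habsq : ‖(q' : ℂ)‖ = Q := by
    rw [hQdef]
    rw [show ((q' : ℂ)) = ((q' : ℝ) : ℂ) by push_cast; ring]
    rw [Complex.norm_real, Real.norm_eq_abs]
    exact abs_of_pos hQpos
  have hdiff : (Complex.I - 1) * (q' : ℂ) ^ 2
      = (c - R) - ((u - 5) * (p' : ℂ) * (q' : ℂ)
        - ((u + Complex.I * u ^ 2) / 2 + 10) * (p' : ℂ) ^ 2) := by
    rw [hcdef, hRdef]; unfold discCenter; ring
  have hI1 : ‖Complex.I - 1‖ ^ 2 = 2 := by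
    rw [Complex.sq_norm]
    simp [Complex.normSq_apply]
    norm_num
  have hI1b : (1.4 : ℝ) ≤ ‖Complex.I - 1‖ := by
    nlinarith [norm_nonneg (Complex.I - 1)]
  have hX1 : ‖(u - 5) * (p' : ℂ) * (q' : ℂ)‖ ≤ 9 * P * Q := by
    rw [norm_mul, norm_mul, habsp, habsq]
    have : ‖u - 5‖ ≤ 9 := by
      calc ‖u - 5‖ ≤ ‖u‖ + ‖(5 : ℂ)‖ :=
        norm_sub_le _ _
      _ ≤ 9 := by simp [← hrdef]; linarith
    have hP0 : (0:ℝ) ≤ P := abs_nonneg _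
    nlinarith [norm_nonneg (u - 5), mul_le_mul_of_nonneg_right
      (mul_le_mul_of_nonneg_right this hP0) hQpos.le]
  have hX2 : ‖((u + Complex.I * u ^ 2) / 2 + 10) * (p' : ℂ) ^ 2‖
      ≤ 20 * P ^ 2 := by
    rw [norm_mul, norm_pow, habsp]
    have hb : ‖(u + Complex.I * u ^ 2) / 2 + 10‖ ≤ 20 := by
      refine le_trans (norm_add_le _ _) ?_
      have : ‖(u + Complex.I * u ^ 2) / 2‖
          ≤ (r + r ^ 2) / 2 := by
        rw [norm_div]
        have : ‖u + Complex.I * u ^ 2‖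
            ≤ r + r ^ 2 := by
          refine le_trans (norm_add_le _ _) ?_
          simp [norm_mul, norm_pow, Complex.norm_I, ← hrdef]
        simp only [Complex.norm_ofNat]
        norm_num
        linarith
      have h10 : ‖(10 : ℂ)‖ = 10 := by norm_num
      nlinarith
    nlinarith [norm_nonneg ((u + Complex.I * u ^ 2) / 2 + 10), sq_nonneg P]
  have hlow : 1.4 * Q ^ 2 ≤ ‖c - R‖ + 9 * P * Q + 20 * P ^ 2 := by
    have habsQ2 : ‖(Complex.I - 1) * (q' : ℂ) ^ 2‖
        = ‖Complex.I - 1‖ * Q ^ 2 := by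
      rw [norm_mul, norm_pow, habsq]
    have htr : ‖(Complex.I - 1) * (q' : ℂ) ^ 2‖
        ≤ ‖c - R‖ + ‖(u - 5) * (p' : ℂ) * (q' : ℂ)
          - ((u + Complex.I * u ^ 2) / 2 + 10) * (p' : ℂ) ^ 2‖ := by
      rw [hdiff]; exact norm_sub_le _ _
    have htr2 : ‖(u - 5) * (p' : ℂ) * (q' : ℂ)
          - ((u + Complex.I * u ^ 2) / 2 + 10) * (p' : ℂ) ^ 2‖
        ≤ 9 * P * Q + 20 * P ^ 2 := by
      refine le_trans (norm_sub_le _ _) ?_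
      linarith
    nlinarith [sq_nonneg Q]
  -- triangle: |c - R| ≤ |t - R| + |t - c|
  have htri : ‖c - R‖ ≤ ‖t - R‖ + ‖t - c‖ := by
    have : c - R = (t - R) - (t - c) := by ring
    rw [this]; exact norm_sub_le _ _
  have hsum : ‖t - R‖ + ‖t - c‖ < 125 * P ^ 3 / Q := by
    have : 74 * P ^ 3 / Q + 51 * P ^ 3 / Q = 125 * P ^ 3 / Q := by ring
    linarith
  have hfinal : ‖c - R‖ < 125 * P ^ 3 / Q := lt_of_le_of_lt htri hsum
  rw [lt_div_iff₀ hQpos] at hsum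
  have htriQ : ‖c - R‖ * Q ≤ (‖t - R‖ + ‖t - c‖) * Q :=
    mul_le_mul_of_nonneg_right htri hQpos.le
  have hlowQ : 1.4 * Q ^ 2 * Q ≤ (‖c - R‖ + 9 * P * Q + 20 * P ^ 2) * Q :=
    mul_le_mul_of_nonneg_right hlow hQpos.le
  have hPQ : 0 ≤ Q - 97 * P := by linarith
  have hP0 : (0:ℝ) ≤ P := abs_nonneg _
  nlinarith [mul_nonneg (mul_nonneg hPQ hQpos.le) hQpos.le,
    mul_nonneg (mul_nonneg hPQ hP0) hQpos.le,
    mul_nonneg (mul_nonneg hPQ hP0) hP0,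
    mul_le_mul_of_nonneg_left hP1 (mul_nonneg hP0 hP0)]
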